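/- Let k ≥ 3 be odd and let P = Q = 2K_k (two disjoint copies of K_k), with cliques P_1, P_2 in P and Q_1, Q_2 in Q. If (P,Q,R) is a k-admissible triple, then for all i,j ∈ {1,2}, the bipartite graph R restricted to parts V(P_i) and V(Q_j) is a matching; in particular e(R) ≤ 4k. -/

import Mathlib

open SimpleGraph

/-- The matching number of `G` restricted to a vertex subset `S`. -/
noncomputable def nuOn {V : Type*} (G : SimpleGraph V) (S : Set V) : ℕ :=
  sSup {n | ∃ M : G.Subgraph, M.IsMatching ∧ M.verts ⊆ S ∧ M.edgeSet.ncard = n}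

/-- `2K_k`: two disjoint copies of the complete graph `K_k`; the first coordinate
indexes the clique. -/
def twoKk (k : ℕ) : SimpleGraph (Fin 2 × Fin k) where
  Adj a b := a.1 = b.1 ∧ a ≠ b
  symm := ⟨fun a b h => ⟨h.1.symm, Ne.symm h.2⟩⟩
  loopless := ⟨fun a h => h.2 rfl⟩

instance (k : ℕ) : DecidableRel (twoKk k).Adj :=
  fun a b => inferInstanceAs (Decidable (a.1 = b.1 ∧ a ≠ b))

lemma nuOn_pos {V : Type*} [Fintype V] (G : SimpleGraph V) (S : Set V) {u v : V}
    (hu : u ∈ S) (hv : v ∈ S) (h : G.Adj u v) : 1 ≤ nuOn G S := by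
  have hbdd : BddAbove {n | ∃ M : G.Subgraph, M.IsMatching ∧ M.verts ⊆ S ∧
      M.edgeSet.ncard = n} := by
    refine ⟨Nat.card (Sym2 V), ?_⟩
    rintro n ⟨M, -, -, rfl⟩
    rw [← Set.ncard_univ]
    exact Set.ncard_le_ncard (Set.subset_univ _) Set.finite_univ
  have hmem : (1 : ℕ) ∈ {n | ∃ M : G.Subgraph, M.IsMatching ∧ M.verts ⊆ S ∧
      M.edgeSet.ncard = n} := by
    refine ⟨G.subgraphOfAdj h, SimpleGraph.Subgraph.IsMatching.subgraphOfAdj h, ?_, ?_⟩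
    · rw [subgraphOfAdj_verts]
      intro x hx
      rcases hx with rfl | hx
      · exact hu
      · rw [Set.mem_singleton_iff] at hx; subst hx; exact hv
    · rw [edgeSet_subgraphOfAdj]
      exact Set.ncard_singleton _
  exact le_csSup hbdd hmem

lemma twoKk_neighbor_ncard (k : ℕ) (hk : 3 ≤ k) (a : Fin 2 × Fin k) :
    ((twoKk k).neighborSet a).ncard = k - 1 := by
  have : (twoKk k).neighborSet a = (fun x : Fin k => (a.1, x)) '' {x | x ≠ a.2} := by
    ext b
    simp only [mem_neighborSet, twoKk, Set.mem_image, Set.mem_setOf_eq]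
    constructor
    · rintro ⟨h1, h2⟩
      exact ⟨b.2, fun hb => h2 (Prod.ext h1 hb.symm), Prod.ext h1 rfl⟩
    · rintro ⟨x, hx, rfl⟩
      exact ⟨rfl, fun hb => hx (congrArg Prod.snd hb).symm⟩
  rw [this, Set.ncard_image_of_injective _ (fun x y hxy => (Prod.ext_iff.mp hxy).2)]
  have h2 : {x : Fin k | x ≠ a.2} = Set.univ \ {a.2} := by
    ext x; simp
  rw [h2, Set.ncard_diff (Set.subset_univ {a.2}) (Set.finite_singleton _), Set.ncard_univ,
    Set.ncard_singleton, Nat.card_eq_fintype_card, Fintype.card_fin]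

theorem twoKk_admissible_matching (k : ℕ) (hk : 3 ≤ k) (hodd : Odd k)
    (R : Fin 2 × Fin k → Fin 2 × Fin k → Prop)
    (hadmA : ∀ a, ((twoKk k).neighborSet a).ncard + nuOn (twoKk k) {b | R a b} ≤ k - 1)
    (hadmB : ∀ b, ((twoKk k).neighborSet b).ncard + nuOn (twoKk k) {a | R a b} ≤ k - 1) :
    (∀ i j : Fin 2,
        (∀ a b b', R (i, a) (j, b) → R (i, a) (j, b') → b = b') ∧
        (∀ a a' b, R (i, a) (j, b) → R (i, a') (j, b) → a = a')) ∧
      Set.ncard {p : (Fin 2 × Fin k) × Fin 2 × Fin k | R p.1 p.2} ≤ 4 * k := by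
  have key1 : ∀ i j : Fin 2, ∀ a b b', R (i, a) (j, b) → R (i, a) (j, b') → b = b' := by
    intro i j a b b' h1 h2
    by_contra hne
    have hadj : (twoKk k).Adj (j, b) (j, b') := ⟨rfl, fun h => hne (congrArg Prod.snd h)⟩
    have hpos := nuOn_pos (twoKk k) {c | R (i, a) c} h1 h2 hadj
    have := hadmA (i, a)
    rw [twoKk_neighbor_ncard k hk] at this
    omega
  have key2 : ∀ i j : Fin 2, ∀ a a' b, R (i, a) (j, b) → R (i, a') (j, b) → a = a' := by
    intro i j a a' b h1 h2
    by_contra hne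
    have hadj : (twoKk k).Adj (i, a) (i, a') := ⟨rfl, fun h => hne (congrArg Prod.snd h)⟩
    have hpos := nuOn_pos (twoKk k) {c | R c (j, b)} h1 h2 hadj
    have := hadmB (j, b)
    rw [twoKk_neighbor_ncard k hk] at this
    omega
  refine ⟨fun i j => ⟨key1 i j, key2 i j⟩, ?_⟩
  have hle : Set.ncard {p : (Fin 2 × Fin k) × Fin 2 × Fin k | R p.1 p.2} ≤
      (Set.univ : Set ((Fin 2 × Fin k) × Fin 2)).ncard := by
    apply Set.ncard_le_ncard_of_injOn (fun p => (p.1, p.2.1))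
    · intro p _; trivial
    · intro p hp q hq heq
      have heq' : (p.1, p.2.1) = (q.1, q.2.1) := heq
      rw [Prod.mk.injEq] at heq'
      obtain ⟨h1, h2⟩ := heq'
      have hb : p.2.2 = q.2.2 := by
        apply key1 p.1.1 p.2.1 p.1.2 p.2.2 q.2.2
        · simpa using hp
        · have : R q.1 q.2 := hq
          rw [← h1] at this
          have hq2 : q.2 = (p.2.1, q.2.2) := Prod.ext h2.symm rfl
          rw [hq2] at this
          simpa using this
      exact Prod.ext h1 (Prod.ext h2 hb)
  rw [Set.ncard_univ, Nat.card_eq_fintype_card] at hle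
  simp only [Fintype.card_prod, Fintype.card_fin] at hle
  omega
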